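/- Under the data model with balanced classes π = 1/2, any linear classifier that ignores the off-manifold coordinates incurs a loss of at least ν·ln 2: for every θ = (θ∥, θ⊥) with θ⊥ = 0, the population logistic loss satisfies L(θ) ≥ ν·ln 2, where ν is the overlapping coefficient of the two class-conditional on-manifold densities. In particular, inf over θ∥ of L((θ∥, 0)) ≥ ν·ln 2. -/

import Mathlib

open MeasureTheory Real

noncomputable section

/-- On-manifold hypercube for class `+1`: `[−k·1_d, (l−k)·1_d]`. -/
def onCubePos (d : ℕ) (l k : ℝ) : Set (Fin d → ℝ) :=
  Set.Icc (fun _ => -k) (fun _ => l - k)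

/-- On-manifold hypercube for class `−1`: `[−(l−k)·1_d, k·1_d]`. -/
def onCubeNeg (d : ℕ) (l k : ℝ) : Set (Fin d → ℝ) :=
  Set.Icc (fun _ => -(l - k)) (fun _ => k)

/-- Off-manifold hypercube `[μ − √3σ·1_g, μ + √3σ·1_g]`. -/
def offCube (g : ℕ) (μ : Fin g → ℝ) (σ : ℝ) : Set (Fin g → ℝ) :=
  Set.Icc (fun j => μ j - Real.sqrt 3 * σ) (fun j => μ j + Real.sqrt 3 * σ)

/-- The uniform probability measure on a set `S ⊆ ℝⁿ`. -/
noncomputable def unif {n : ℕ} (S : Set (Fin n → ℝ)) : Measure (Fin n → ℝ) :=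
  (volume S)⁻¹ • volume.restrict S

/-- The joint distribution of `((x∥, x⊥), y)`: with probability `pr` the label is
`y = +1` and `x∥ ~ U(I∥⁽⁺¹⁾)`, `x⊥ ~ U(I⊥⁽⁺¹⁾)` independently; with probability
`1 − pr` the label is `y = −1` and `x∥ ~ U(I∥⁽⁻¹⁾)`, `x⊥ ~ U(I⊥⁽⁻¹⁾)`. -/
noncomputable def dataMeasure (d g : ℕ) (pr l k σoff : ℝ) (μp μm : Fin g → ℝ) :
    Measure (((Fin d → ℝ) × (Fin g → ℝ)) × ℝ) :=
  ENNReal.ofReal pr •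
    (((unif (onCubePos d l k)).prod (unif (offCube g μp σoff))).map fun x => (x, (1 : ℝ)))
  + ENNReal.ofReal (1 - pr) •
    (((unif (onCubeNeg d l k)).prod (unif (offCube g μm σoff))).map fun x => (x, (-1 : ℝ)))

/-- The logistic loss `ℓ(z) = ln(1 + e^{−z})`. -/
noncomputable def logloss (z : ℝ) : ℝ := Real.log (1 + Real.exp (-z))

/-- The sigmoid function `σ(v) = (1 + e^{−v})⁻¹`. -/
noncomputable def sigmoid (v : ℝ) : ℝ := (1 + Real.exp (-v))⁻¹

/-- Linear score `θᵀx = θ∥ᵀx∥ + θ⊥ᵀx⊥`. -/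
def score {d g : ℕ} (θ x : (Fin d → ℝ) × (Fin g → ℝ)) : ℝ :=
  ∑ i, θ.1 i * x.1 i + ∑ j, θ.2 j * x.2 j

/-- The population logistic loss `L(θ) = E[ℓ(y·θᵀx)]`. -/
noncomputable def popLoss {d g : ℕ} (μ : Measure (((Fin d → ℝ) × (Fin g → ℝ)) × ℝ))
    (θ : (Fin d → ℝ) × (Fin g → ℝ)) : ℝ :=
  ∫ p, logloss (p.2 * score θ p.1) ∂μ

/-- The overlapping coefficient `ν = ∫ min(f∥⁽⁻¹⁾(u), f∥⁽⁺¹⁾(u)) du` of the two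
class-conditional on-manifold uniform densities (each density being
`1/l^d` on its hypercube of side `l`). -/
noncomputable def ovl (d : ℕ) (l k : ℝ) : ℝ :=
  ∫ u : Fin d → ℝ, min ((onCubeNeg d l k).indicator (fun _ => 1 / l ^ d) u)
    ((onCubePos d l k).indicator (fun _ => 1 / l ^ d) u)

section AuxLemmas

lemma smul_prod_meas {α β : Type*} [MeasurableSpace α] [MeasurableSpace β]
    (μ : Measure α) (ν : Measure β) [SFinite μ] [SFinite ν] (c : ENNReal) :
    (c • μ).prod ν = c • (μ.prod ν) := by
  ext s hs
  rw [Measure.prod_apply hs, Measure.smul_apply, Measure.prod_apply hs, lintegral_smul_measure,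
    smul_eq_mul]

lemma prod_smul_meas {α β : Type*} [MeasurableSpace α] [MeasurableSpace β]
    (μ : Measure α) (ν : Measure β) [SFinite μ] [SFinite ν] (c : ENNReal) :
    μ.prod (c • ν) = c • (μ.prod ν) := by
  ext s hs
  rw [Measure.prod_apply hs, Measure.smul_apply, Measure.prod_apply hs]
  simp only [Measure.smul_apply, smul_eq_mul]
  rw [lintegral_const_mul _ (measurable_measure_prodMk_left hs)]

lemma continuous_logloss : Continuous logloss := by
  have h : Continuous fun z : ℝ => 1 + Real.exp (-z) :=
    continuous_const.add (Real.continuous_exp.comp continuous_neg)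
  exact h.log fun x => by positivity

lemma logloss_nonneg (z : ℝ) : 0 ≤ logloss z :=
  Real.log_nonneg (by nlinarith [Real.exp_pos (-z)])

lemma logloss_pair (z : ℝ) : 2 * Real.log 2 ≤ logloss z + logloss (-z) := by
  have h1 : (0:ℝ) < 1 + Real.exp (-z) := by positivity
  have h2 : (0:ℝ) < 1 + Real.exp z := by positivity
  have hm : Real.exp (-z) * Real.exp z = 1 := by
    rw [← Real.exp_add]; simp
  have hkey : (4:ℝ) ≤ (1 + Real.exp (-z)) * (1 + Real.exp z) := by
    nlinarith [sq_nonneg (Real.exp z - 1), Real.exp_pos (-z), Real.exp_pos z]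
  have he : logloss z + logloss (-z) = Real.log ((1 + Real.exp (-z)) * (1 + Real.exp z)) := by
    rw [logloss, logloss, neg_neg, ← Real.log_mul h1.ne' h2.ne']
  rw [he]
  have h4 : 2 * Real.log 2 = Real.log 4 := by
    rw [show (4:ℝ) = 2 ^ 2 by norm_num, Real.log_pow]; push_cast; ring
  rw [h4]
  exact Real.log_le_log (by norm_num) hkey

lemma isProb_unif {n : ℕ} {S : Set (Fin n → ℝ)} (h0 : volume S ≠ 0) (ht : volume S ≠ ⊤) :
    IsProbabilityMeasure (unif S) := by
  constructor
  rw [unif, Measure.smul_apply, Measure.restrict_apply_univ, smul_eq_mul,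
    ENNReal.inv_mul_cancel h0 ht]

lemma sfinite_unif {n : ℕ} (S : Set (Fin n → ℝ)) : SFinite (unif S) := by
  unfold unif; infer_instance

lemma integral_unif {n : ℕ} (S : Set (Fin n → ℝ)) (f : (Fin n → ℝ) → ℝ) :
    ∫ x, f x ∂(unif S) = ((volume S)⁻¹).toReal * ∫ x in S, f x := by
  rw [unif, integral_smul_measure, smul_eq_mul]

lemma integrable_unif_prod {d g : ℕ} {S : Set (Fin d → ℝ)} {T : Set (Fin g → ℝ)}
    (hS : IsCompact S) (hT : IsCompact T) (hS0 : volume S ≠ 0) (hT0 : volume T ≠ 0)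
    {f : (Fin d → ℝ) × (Fin g → ℝ) → ℝ} (hf : Continuous f) :
    Integrable f ((unif S).prod (unif T)) := by
  rw [unif, unif, smul_prod_meas, prod_smul_meas, Measure.prod_restrict,
    ← Measure.volume_eq_prod]
  exact ((hf.continuousOn.integrableOn_compact (hS.prod hT)).smul_measure
    (ENNReal.inv_ne_top.mpr hT0)).smul_measure (ENNReal.inv_ne_top.mpr hS0)

lemma integral_fst_unif_prod {d g : ℕ} (S : Set (Fin d → ℝ)) (T : Set (Fin g → ℝ))
    (hT : IsProbabilityMeasure (unif T)) (f : (Fin d → ℝ) → ℝ) :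
    ∫ x : (Fin d → ℝ) × (Fin g → ℝ), f x.1 ∂((unif S).prod (unif T)) = ∫ u, f u ∂(unif S) := by
  haveI := sfinite_unif S
  haveI := sfinite_unif T
  have h : (fun x : (Fin d → ℝ) × (Fin g → ℝ) => f x.1)
      = fun x => f x.1 * (fun _ : Fin g → ℝ => (1:ℝ)) x.2 := by
    funext x; simp
  rw [h]
  rw [show ∫ (x : (Fin d → ℝ) × (Fin g → ℝ)), f x.1 * (fun _ : Fin g → ℝ => (1:ℝ)) x.2
      ∂(unif S).prod (unif T) = (∫ u, f u ∂unif S) * ∫ y, (1:ℝ) ∂unif T from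
    integral_prod_mul f (fun _ => (1:ℝ))]
  simp

end AuxLemmas

/-- **On-manifold-only classifiers incur loss at least `ν·ln 2`.**
Under the data model with balanced classes (`π = 1/2`), any linear classifier that
ignores the off-manifold coordinates (`θ⊥ = 0`) has population logistic loss at
least `ν·ln 2`, where `ν` is the overlapping coefficient of the two
class-conditional on-manifold densities; in particular
`inf_{θ∥} L((θ∥, 0)) ≥ ν·ln 2`. -/
theorem on_manifold_only_loss_lower_bound (d g : ℕ) (l k σoff : ℝ)
    (μp μm : Fin g → ℝ)
    (hk : 0 < k) (hkl : k < l / 2)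
    (hσoff : 0 < σoff) (hσ : σoff < Real.sqrt (l ^ 2 / 12))
    (hdisj : Disjoint (offCube g μm σoff) (offCube g μp σoff)) :
    (∀ θon : Fin d → ℝ,
      ovl d l k * Real.log 2 ≤
        popLoss (dataMeasure d g (1 / 2) l k σoff μp μm) (θon, 0)) ∧
    ovl d l k * Real.log 2 ≤
      ⨅ θon : Fin d → ℝ, popLoss (dataMeasure d g (1 / 2) l k σoff μp μm) (θon, 0) := by
  have hl : 0 < l := by linarith
  -- volumes
  have hCpvol : volume (onCubePos d l k) = ENNReal.ofReal l ^ d := by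
    rw [onCubePos, Real.volume_Icc_pi]
    simp [show l - k - -k = l by ring]
  have hCnvol : volume (onCubeNeg d l k) = ENNReal.ofReal l ^ d := by
    rw [onCubeNeg, Real.volume_Icc_pi]
    simp [show k - -(l - k) = l by ring]
  have hvol0 : (ENNReal.ofReal l ^ d) ≠ 0 :=
    pow_ne_zero _ (by simpa using hl)
  have hvolt : (ENNReal.ofReal l ^ d) ≠ ⊤ := ENNReal.pow_ne_top ENNReal.ofReal_ne_top
  have hsq3 : 0 < Real.sqrt 3 * σoff :=
    mul_pos (Real.sqrt_pos.mpr (by norm_num)) hσoff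
  have hoffvol : ∀ μ0 : Fin g → ℝ,
      volume (offCube g μ0 σoff) = ENNReal.ofReal (2 * (Real.sqrt 3 * σoff)) ^ g := by
    intro μ0
    rw [offCube, Real.volume_Icc_pi]
    have h : ∀ j : Fin g,
        μ0 j + Real.sqrt 3 * σoff - (μ0 j - Real.sqrt 3 * σoff) = 2 * (Real.sqrt 3 * σoff) :=
      fun j => by ring
    simp [h]
  have hoff0 : ∀ μ0 : Fin g → ℝ, volume (offCube g μ0 σoff) ≠ 0 := by
    intro μ0
    rw [hoffvol μ0]
    exact pow_ne_zero _ (by simpa using by linarith : ENNReal.ofReal (2 * (Real.sqrt 3 * σoff)) ≠ 0)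
  have hofft : ∀ μ0 : Fin g → ℝ, volume (offCube g μ0 σoff) ≠ ⊤ := by
    intro μ0
    rw [hoffvol μ0]
    exact ENNReal.pow_ne_top ENNReal.ofReal_ne_top
  -- probability measures
  have hPp : IsProbabilityMeasure (unif (onCubePos d l k)) :=
    isProb_unif (hCpvol ▸ hvol0) (hCpvol ▸ hvolt)
  have hPn : IsProbabilityMeasure (unif (onCubeNeg d l k)) :=
    isProb_unif (hCnvol ▸ hvol0) (hCnvol ▸ hvolt)
  have hQp : IsProbabilityMeasure (unif (offCube g μp σoff)) :=
    isProb_unif (hoff0 μp) (hofft μp)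
  have hQm : IsProbabilityMeasure (unif (offCube g μm σoff)) :=
    isProb_unif (hoff0 μm) (hofft μm)
  -- compactness
  have hCpc : IsCompact (onCubePos d l k) := isCompact_Icc
  have hCnc : IsCompact (onCubeNeg d l k) := isCompact_Icc
  have hQpc : IsCompact (offCube g μp σoff) := isCompact_Icc
  have hQmc : IsCompact (offCube g μm σoff) := isCompact_Icc
  -- the intersection
  set C : Set (Fin d → ℝ) := onCubeNeg d l k ∩ onCubePos d l k with hC
  have hCm : MeasurableSet C := by
    rw [hC, onCubeNeg, onCubePos]
    exact measurableSet_Icc.inter measurableSet_Icc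
  have hCc : IsCompact C := hCnc.inter hCpc
  have hCfin : volume C < ⊤ := hCc.measure_lt_top
  -- overlap value
  have hld : (0:ℝ) < l ^ d := by positivity
  have hν : ovl d l k = (volume C).toReal * (1 / l ^ d) := by
    rw [ovl]
    have hc : (0:ℝ) ≤ 1 / l ^ d := by positivity
    have hmin : ∀ u : Fin d → ℝ,
        min ((onCubeNeg d l k).indicator (fun _ => 1 / l ^ d) u)
          ((onCubePos d l k).indicator (fun _ => 1 / l ^ d) u)
        = C.indicator (fun _ => 1 / l ^ d) u := by
      intro u
      by_cases h1 : u ∈ onCubeNeg d l k <;> by_cases h2 : u ∈ onCubePos d l k <;>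
        simp [Set.indicator, hC, h1, h2, min_eq_left hc, min_eq_right hc, hld.le]
    have heq : (fun u : Fin d → ℝ =>
        min ((onCubeNeg d l k).indicator (fun _ => 1 / l ^ d) u)
          ((onCubePos d l k).indicator (fun _ => 1 / l ^ d) u))
        = C.indicator (fun _ => 1 / l ^ d) := funext hmin
    rw [heq, integral_indicator_const _ hCm, smul_eq_mul, measureReal_def]
  -- the main pointwise bound
  have key : ∀ θon : Fin d → ℝ,
      ovl d l k * Real.log 2 ≤
        popLoss (dataMeasure d g (1 / 2) l k σoff μp μm) (θon, 0) := by
    intro θon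
    set s : (Fin d → ℝ) → ℝ := fun u => ∑ i, θon i * u i with hs
    have hsC : Continuous s :=
      continuous_finset_sum _ fun i _ => continuous_const.mul (continuous_apply i)
    have hscoreC : Continuous fun x : (Fin d → ℝ) × (Fin g → ℝ) =>
        score (θon, (0 : Fin g → ℝ)) x := by
      unfold score
      exact (continuous_finset_sum _ fun i _ =>
          continuous_const.mul ((continuous_apply i).comp continuous_fst)).add
        (continuous_finset_sum _ fun j _ =>
          continuous_const.mul ((continuous_apply j).comp continuous_snd))
    have hFc : Continuous fun p : ((Fin d → ℝ) × (Fin g → ℝ)) × ℝ =>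
        logloss (p.2 * score (θon, (0 : Fin g → ℝ)) p.1) :=
      continuous_logloss.comp (continuous_snd.mul (hscoreC.comp continuous_fst))
    have hm1 : Measurable fun x : (Fin d → ℝ) × (Fin g → ℝ) => (x, (1:ℝ)) :=
      measurable_id.prodMk measurable_const
    have hm2 : Measurable fun x : (Fin d → ℝ) × (Fin g → ℝ) => (x, (-1:ℝ)) :=
      measurable_id.prodMk measurable_const
    have hIntP : Integrable
        (fun x : (Fin d → ℝ) × (Fin g → ℝ) =>
          logloss (((x, (1:ℝ))).2 * score (θon, (0 : Fin g → ℝ)) ((x, (1:ℝ))).1))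
        ((unif (onCubePos d l k)).prod (unif (offCube g μp σoff))) :=
      integrable_unif_prod hCpc hQpc (hCpvol ▸ hvol0) (hoff0 μp)
        (hFc.comp (continuous_id.prodMk continuous_const))
    have hIntN : Integrable
        (fun x : (Fin d → ℝ) × (Fin g → ℝ) =>
          logloss (((x, (-1:ℝ))).2 * score (θon, (0 : Fin g → ℝ)) ((x, (-1:ℝ))).1))
        ((unif (onCubeNeg d l k)).prod (unif (offCube g μm σoff))) :=
      integrable_unif_prod hCnc hQmc (hCnvol ▸ hvol0) (hoff0 μm)
        (hFc.comp (continuous_id.prodMk continuous_const))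
    -- rewrite the population loss
    have hpop : popLoss (dataMeasure d g (1 / 2) l k σoff μp μm) (θon, 0)
        = (1/2 : ℝ) * ∫ x, logloss (((x, (1:ℝ))).2 * score (θon, (0 : Fin g → ℝ)) x)
            ∂((unif (onCubePos d l k)).prod (unif (offCube g μp σoff)))
        + (1/2 : ℝ) * ∫ x, logloss (((x, (-1:ℝ))).2 * score (θon, (0 : Fin g → ℝ)) x)
            ∂((unif (onCubeNeg d l k)).prod (unif (offCube g μm σoff))) := by
      rw [popLoss, dataMeasure]
      rw [show (1 : ℝ) - 1/2 = 1/2 by norm_num]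
      rw [integral_add_measure
        ((((integrable_map_measure hFc.aestronglyMeasurable hm1.aemeasurable).mpr
            hIntP)).smul_measure ENNReal.ofReal_ne_top)
        ((((integrable_map_measure hFc.aestronglyMeasurable hm2.aemeasurable).mpr
            hIntN)).smul_measure ENNReal.ofReal_ne_top),
        integral_smul_measure, integral_smul_measure,
        integral_map hm1.aemeasurable hFc.aestronglyMeasurable,
        integral_map hm2.aemeasurable hFc.aestronglyMeasurable,
        ENNReal.toReal_ofReal (by norm_num : (0:ℝ) ≤ 1/2), smul_eq_mul, smul_eq_mul]
    have g1 : (fun x : (Fin d → ℝ) × (Fin g → ℝ) =>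
        logloss (((x, (1:ℝ))).2 * score (θon, (0 : Fin g → ℝ)) x))
        = fun x => logloss (s x.1) := by
      funext x; simp [score, hs]
    have g2 : (fun x : (Fin d → ℝ) × (Fin g → ℝ) =>
        logloss (((x, (-1:ℝ))).2 * score (θon, (0 : Fin g → ℝ)) x))
        = fun x => logloss (-(s x.1)) := by
      funext x; simp [score, hs]
    rw [g1, g2, integral_fst_unif_prod (onCubePos d l k) (offCube g μp σoff) hQp
        (fun u => logloss (s u)),
      integral_fst_unif_prod (onCubeNeg d l k) (offCube g μm σoff) hQm
        (fun u => logloss (-(s u))),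
      integral_unif, integral_unif, hCpvol, hCnvol] at hpop
    have hrt : ((ENNReal.ofReal l ^ d)⁻¹).toReal = (l ^ d)⁻¹ := by
      rw [← ENNReal.ofReal_pow hl.le, ← ENNReal.ofReal_inv_of_pos hld,
        ENNReal.toReal_ofReal (by positivity)]
    rw [hrt] at hpop
    -- integrability on the cubes
    have hf1c : Continuous fun u => logloss (s u) := continuous_logloss.comp hsC
    have hf2c : Continuous fun u => logloss (-(s u)) :=
      continuous_logloss.comp hsC.neg
    have hIp : IntegrableOn (fun u => logloss (s u)) (onCubePos d l k) :=
      hf1c.continuousOn.integrableOn_compact hCpc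
    have hIn : IntegrableOn (fun u => logloss (-(s u))) (onCubeNeg d l k) :=
      hf2c.continuousOn.integrableOn_compact hCnc
    have hIC1 : IntegrableOn (fun u => logloss (s u)) C :=
      hf1c.continuousOn.integrableOn_compact hCc
    have hIC2 : IntegrableOn (fun u => logloss (-(s u))) C :=
      hf2c.continuousOn.integrableOn_compact hCc
    have hA : ∫ u in C, logloss (s u) ≤ ∫ u in onCubePos d l k, logloss (s u) :=
      setIntegral_mono_set hIp
        (Filter.Eventually.of_forall fun u => logloss_nonneg _)
        (HasSubset.Subset.eventuallyLE Set.inter_subset_right)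
    have hB : ∫ u in C, logloss (-(s u)) ≤ ∫ u in onCubeNeg d l k, logloss (-(s u)) :=
      setIntegral_mono_set hIn
        (Filter.Eventually.of_forall fun u => logloss_nonneg _)
        (HasSubset.Subset.eventuallyLE Set.inter_subset_left)
    have hadd : ∫ u in C, (logloss (s u) + logloss (-(s u)))
        = (∫ u in C, logloss (s u)) + ∫ u in C, logloss (-(s u)) :=
      integral_add hIC1 hIC2
    have h2l : (volume C).toReal * (2 * Real.log 2)
        ≤ ∫ u in C, (logloss (s u) + logloss (-(s u))) := by
      have hmono := setIntegral_mono_on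
        (integrableOn_const hCfin.ne) (hIC1.add hIC2) hCm
        (fun u _ => logloss_pair (s u))
      simpa [setIntegral_const, smul_eq_mul, measureReal_def] using hmono
    have hAB : (volume C).toReal * (2 * Real.log 2)
        ≤ (∫ u in onCubePos d l k, logloss (s u))
          + ∫ u in onCubeNeg d l k, logloss (-(s u)) := by
      rw [hadd] at h2l; linarith
    rw [hpop, hν]
    have hfin := mul_le_mul_of_nonneg_left hAB
      (show (0:ℝ) ≤ 1/2 * (l ^ d)⁻¹ by positivity)
    calc (volume C).toReal * (1 / l ^ d) * Real.log 2
        = 1/2 * (l ^ d)⁻¹ * ((volume C).toReal * (2 * Real.log 2)) := by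
          field_simp
      _ ≤ 1/2 * (l ^ d)⁻¹ * ((∫ u in onCubePos d l k, logloss (s u))
            + ∫ u in onCubeNeg d l k, logloss (-(s u))) := hfin
      _ = 1/2 * ((l ^ d)⁻¹ * ∫ u in onCubePos d l k, logloss (s u))
          + 1/2 * ((l ^ d)⁻¹ * ∫ u in onCubeNeg d l k, logloss (-(s u))) := by ring
  exact ⟨key, le_ciInf key⟩
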